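/- Let 0 < ε, c < 1 be constants, M ≤ 2^{(1−ε)L}, and K ≤ cε√M (with M, L sufficiently large so that εML − K + 1 ≥ εML/√2). Then the number of special K-subsets of ∂f_W is at least (1−c²)·binom(|∂f_W|, K) for every M-subset W of {0,1}^L. -/

import Mathlib

/-- Boundary edges of the indicator of `W`, each represented by the ordered pair
whose first coordinate is the endpoint in `W`. -/
def boundary (L : ℕ) (W : Finset (Fin L → Bool)) :
    Set ((Fin L → Bool) × (Fin L → Bool)) :=
  {p | p.1 ∈ W ∧ p.2 ∉ W ∧ hammingDist p.1 p.2 = 1}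

/-- A set `S` of `K` boundary edges of `W` is special if no two distinct edges of
`S` share their endpoint inside `W`. -/
def IsSpecial (L K : ℕ) (W : Finset (Fin L → Bool))
    (S : Finset ((Fin L → Bool) × (Fin L → Bool))) : Prop :=
  ↑S ⊆ boundary L W ∧ S.card = K ∧
    ∀ e₁ ∈ S, ∀ e₂ ∈ S, e₁ ≠ e₂ → e₁.1 ≠ e₂.1

open Finset

-- distance-one characterization
lemma dist_one_iff {L : ℕ} (w x : Fin L → Bool) :
    hammingDist w x = 1 ↔ ∃ i, x = Function.update w i (!w i) := by
  unfold hammingDist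
  rw [Finset.card_eq_one]
  constructor
  · rintro ⟨i, hi⟩
    refine ⟨i, funext fun j => ?_⟩
    rcases eq_or_ne j i with rfl | hj
    · have : j ∈ ({j} : Finset (Fin L)) := Finset.mem_singleton_self j
      rw [← hi, Finset.mem_filter] at this
      simp only [Function.update_self]
      revert this
      cases w j <;> cases x j <;> simp
    · have : j ∉ ({i} : Finset (Fin L)) := by simp [hj]
      rw [← hi, Finset.mem_filter] at this
      simp only [Function.update_of_ne hj]
      push_neg at this
      exact (this (Finset.mem_univ j)).symm ▸ rfl
  · rintro ⟨i, rfl⟩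
    refine ⟨i, ?_⟩
    ext j
    simp only [Finset.mem_filter, Finset.mem_univ, true_and, Finset.mem_singleton]
    rcases eq_or_ne j i with rfl | hj
    · simp [Function.update_self]
    · simp [Function.update_of_ne hj, hj]

lemma update_inj {L : ℕ} (w : Fin L → Bool) {i j : Fin L}
    (h : Function.update w i (!w i) = Function.update w j (!w j)) : i = j := by
  by_contra hij
  have := congrFun h i
  rw [Function.update_self, Function.update_of_ne hij] at this
  cases w i <;> simp_all

-- sphere of radius 1 has card L
lemma sphere_card {L : ℕ} (w : Fin L → Bool) :
    ({x | hammingDist w x = 1} : Finset (Fin L → Bool)).card = L := by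
  have : ({x | hammingDist w x = 1} : Finset (Fin L → Bool)) =
      Finset.univ.image (fun i : Fin L => Function.update w i (!w i)) := by
    ext x
    simp only [Finset.mem_filter, Finset.mem_univ, true_and, Finset.mem_image]
    rw [dist_one_iff]
    tauto
  rw [this, Finset.card_image_of_injective _ (fun i j h => update_inj w h)]
  simp

lemma dist_split {n : ℕ} (f g : Fin (n+1) → Bool) :
    hammingDist f g = hammingDist (Fin.init f) (Fin.init g) +
      (if f (Fin.last n) = g (Fin.last n) then 0 else 1) := by
  unfold hammingDist
  rw [Finset.card_filter, Finset.card_filter, Fin.sum_univ_castSucc]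
  simp only [Fin.init]
  congr 1
  split <;> simp_all

lemma dist_split' {n : ℕ} (f g : Fin (n+1) → Bool) (h : f (Fin.last n) = g (Fin.last n)) :
    hammingDist f g = hammingDist (Fin.init f) (Fin.init g) := by
  rw [dist_split, if_pos h, Nat.add_zero]

lemma dist_cross {n : ℕ} (f g : Fin (n+1) → Bool) (h : f (Fin.last n) ≠ g (Fin.last n))
    (hd : hammingDist f g = 1) : Fin.init f = Fin.init g := by
  rw [dist_split, if_neg h] at hd
  have : hammingDist (Fin.init f) (Fin.init g) = 0 := by omega
  exact hammingDist_eq_zero.mp this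

lemma snoc_init {n : ℕ} (f : Fin (n+1) → Bool) :
    Fin.snoc (Fin.init f) (f (Fin.last n)) = f := Fin.snoc_init_self f

lemma two_rpow_le {x : ℝ} (h0 : 0 ≤ x) (h1 : x ≤ 1) : (2:ℝ) ^ x ≤ 1 + x := by
  have h := convexOn_exp.2 (Set.mem_univ (0:ℝ)) (Set.mem_univ (Real.log 2))
    (by linarith : (0:ℝ) ≤ 1 - x) h0 (by ring)
  simp only [smul_eq_mul, mul_zero, zero_add, Real.exp_zero,
    Real.exp_log two_pos] at h
  rw [Real.rpow_def_of_pos two_pos]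
  calc Real.exp (Real.log 2 * x) = Real.exp ((1-x)*0 + x * Real.log 2) := by ring_nf
    _ ≤ (1-x) * 1 + x * 2 := by
        have := convexOn_exp.2 (Set.mem_univ (0:ℝ)) (Set.mem_univ (Real.log 2))
          (by linarith : (0:ℝ) ≤ 1 - x) h0 (by ring)
        simpa [Real.exp_log two_pos] using this
    _ = 1 + x := by ring

lemma le_logb_one_add {x : ℝ} (h0 : 0 ≤ x) (h1 : x ≤ 1) : x ≤ Real.logb 2 (1 + x) := by
  rw [Real.le_logb_iff_rpow_le one_lt_two (by linarith)]
  exact two_rpow_le h0 h1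

lemma log_ineq {a b : ℝ} (hb : 0 ≤ b) (hba : b ≤ a) :
    a * Real.logb 2 a + b * Real.logb 2 b + 2 * b ≤ (a + b) * Real.logb 2 (a + b) := by
  rcases eq_or_lt_of_le hb with rfl | hb0
  · simp
  have ha0 : 0 < a := lt_of_lt_of_le hb0 hba
  have hab : 0 < a + b := by linarith
  have key1 : b * 1 ≤ b * Real.logb 2 ((a+b)/b) := by
    apply mul_le_mul_of_nonneg_left _ hb
    rw [show (1:ℝ) = Real.logb 2 2 by simp]
    apply Real.logb_le_logb_of_le one_lt_two two_pos
    rw [le_div_iff₀ hb0]; linarith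
  have key2 : b ≤ a * Real.logb 2 ((a+b)/a) := by
    have h1 : b / a ≤ 1 := by rw [div_le_one ha0]; exact hba
    have h2 : 0 ≤ b / a := div_nonneg hb ha0.le
    have := le_logb_one_add h2 h1
    calc b = a * (b / a) := by field_simp
      _ ≤ a * Real.logb 2 (1 + b/a) := mul_le_mul_of_nonneg_left this ha0.le
      _ = a * Real.logb 2 ((a+b)/a) := by
          have : 1 + b/a = (a+b)/a := by field_simp
          rw [this]
  have e1 : Real.logb 2 ((a+b)/a) = Real.logb 2 (a+b) - Real.logb 2 a :=
    Real.logb_div hab.ne' ha0.ne'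
  have e2 : Real.logb 2 ((a+b)/b) = Real.logb 2 (a+b) - Real.logb 2 b :=
    Real.logb_div hab.ne' hb0.ne'
  rw [e1] at key2
  rw [e2] at key1
  nlinarith [key1, key2]


def edges {n : ℕ} (W : Finset (Fin n → Bool)) :
    Finset ((Fin n → Bool) × (Fin n → Bool)) :=
  (W ×ˢ W).filter (fun p => hammingDist p.1 p.2 = 1)

def bslice {n : ℕ} (W : Finset (Fin (n+1) → Bool)) (b : Bool) : Finset (Fin n → Bool) :=
  (W.filter (fun f => f (Fin.last n) = b)).image Fin.init

lemma mem_bslice {n : ℕ} {W : Finset (Fin (n+1) → Bool)} {b : Bool} {u : Fin n → Bool} :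
    u ∈ bslice W b ↔ Fin.snoc u b ∈ W := by
  simp only [bslice, Finset.mem_image, Finset.mem_filter]
  constructor
  · rintro ⟨f, ⟨hf, hb⟩, rfl⟩
    rwa [← hb, Fin.snoc_init_self]
  · intro h
    exact ⟨Fin.snoc u b, ⟨h, by simp⟩, by simp⟩

lemma card_bslice_add {n : ℕ} (W : Finset (Fin (n+1) → Bool)) :
    (bslice W false).card + (bslice W true).card = W.card := by
  have key : ∀ b, (bslice W b).card = (W.filter (fun f => f (Fin.last n) = b)).card := by
    intro b
    apply Finset.card_image_of_injOn
    intro f hf g hg hfg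
    simp only [Finset.coe_filter, Set.mem_setOf_eq] at hf hg
    rw [← Fin.snoc_init_self f, ← Fin.snoc_init_self g, hf.2, hg.2, hfg]
  rw [key, key]
  rw [← Finset.card_filter_add_card_filter_not
    (s := W) (p := fun f => f (Fin.last n) = false)]
  congr 1
  apply congrArg Finset.card
  apply Finset.filter_congr
  intro f _
  simp
lemma core {n : ℕ} (W : Finset (Fin (n+1) → Bool)) :
    (edges W).card ≤ (edges (bslice W false)).card + (edges (bslice W true)).card
      + 2 * min (bslice W false).card (bslice W true).card := by
  classical
  set same : Bool → Finset _ := fun b => (edges W).filter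
    (fun p => p.1 (Fin.last n) = b ∧ p.2 (Fin.last n) = b) with hsame
  set cross := (edges W).filter (fun p => ¬ p.1 (Fin.last n) = p.2 (Fin.last n)) with hcross
  have e0 : (edges W).filter (fun p => (p.1 (Fin.last n) = p.2 (Fin.last n)) ∧ p.1 (Fin.last n) = false) = same false := by
    ext p
    simp only [hsame, Finset.mem_filter]
    constructor
    · rintro ⟨he, heq, hf⟩
      exact ⟨he, hf, by rw [← heq]; exact hf⟩
    · rintro ⟨he, hf, ht⟩
      exact ⟨he, by rw [hf, ht], hf⟩
  have e1 : (edges W).filter (fun p => (p.1 (Fin.last n) = p.2 (Fin.last n)) ∧ ¬ (p.1 (Fin.last n) = false)) = same true := by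
    ext p
    simp only [hsame, Finset.mem_filter, Bool.not_eq_false]
    constructor
    · rintro ⟨he, heq, hf⟩
      exact ⟨he, hf, by rw [← heq]; exact hf⟩
    · rintro ⟨he, hf, ht⟩
      exact ⟨he, by rw [hf, ht], hf⟩
  have hsplit : (edges W).card = (same false).card + (same true).card + cross.card := by
    rw [← Finset.card_filter_add_card_filter_not
      (s := edges W) (p := fun p => p.1 (Fin.last n) = p.2 (Fin.last n))]
    congr 1
    rw [← Finset.card_filter_add_card_filter_not
      (s := (edges W).filter (fun p => p.1 (Fin.last n) = p.2 (Fin.last n)))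
      (p := fun p => p.1 (Fin.last n) = false)]
    rw [Finset.filter_filter, Finset.filter_filter, e0, e1]
  have hsameb : ∀ b, (same b).card ≤ (edges (bslice W b)).card := by
    intro b
    apply Finset.card_le_card_of_injOn (fun p : (Fin (n+1) → Bool) × (Fin (n+1) → Bool) => (Fin.init p.1, Fin.init p.2))
    · intro p hp
      simp only [Finset.mem_coe, hsame, edges, Finset.mem_filter, Finset.mem_product] at hp
      obtain ⟨⟨⟨h1, h2⟩, hd⟩, hb1, hb2⟩ := hp
      simp only [Finset.mem_coe, edges, Finset.mem_filter, Finset.mem_product]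
      refine ⟨⟨?_, ?_⟩, ?_⟩
      · rw [mem_bslice]; rwa [← hb1, Fin.snoc_init_self]
      · rw [mem_bslice]; rwa [← hb2, Fin.snoc_init_self]
      · rw [← dist_split' p.1 p.2 (by rw [hb1, hb2])]; exact hd
    · intro p hp q hq h
      simp only [Finset.mem_coe, hsame, Finset.mem_filter] at hp hq
      have h1 := congrArg Prod.fst h
      have h2 := congrArg Prod.snd h
      simp only at h1 h2
      have e1 : p.1 = q.1 := by
        rw [← Fin.snoc_init_self p.1, ← Fin.snoc_init_self q.1, h1, hp.2.1, hq.2.1]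
      have e2 : p.2 = q.2 := by
        rw [← Fin.snoc_init_self p.2, ← Fin.snoc_init_self q.2, h2, hp.2.2, hq.2.2]
      exact Prod.ext e1 e2
  have hcrossb : cross.card ≤ 2 * min (bslice W false).card (bslice W true).card := by
    have : cross.card ≤ (((bslice W false ∩ bslice W true) ×ˢ (Finset.univ : Finset Bool))).card := by
      apply Finset.card_le_card_of_injOn (fun p : (Fin (n+1) → Bool) × (Fin (n+1) → Bool) => (Fin.init p.1, p.1 (Fin.last n)))
      · intro p hp
        simp only [Finset.mem_coe, hcross, edges, Finset.mem_filter, Finset.mem_product] at hp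
        obtain ⟨⟨⟨h1, h2⟩, hd⟩, hne⟩ := hp
        have hinit : Fin.init p.1 = Fin.init p.2 := dist_cross p.1 p.2 hne hd
        have h2last : p.2 (Fin.last n) = !p.1 (Fin.last n) := by
          revert hne; cases p.1 (Fin.last n) <;> cases p.2 (Fin.last n) <;> simp
        have hA : Fin.snoc (Fin.init p.1) (p.1 (Fin.last n)) = p.1 := Fin.snoc_init_self p.1
        have hB : Fin.snoc (Fin.init p.1) (!(p.1 (Fin.last n))) = p.2 := by
          rw [hinit, ← h2last]
          exact Fin.snoc_init_self p.2
        simp only [Finset.mem_coe, Finset.mem_product, Finset.mem_univ, and_true, Finset.mem_inter]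
        constructor <;> rw [mem_bslice] <;> cases hb : p.1 (Fin.last n) <;>
          rw [hb] at hA hB <;> simp only [Bool.not_false, Bool.not_true] at hB
        · rw [hA]; exact h1
        · rw [hB]; exact h2
        · rw [hB]; exact h2
        · rw [hA]; exact h1
      · intro p hp q hq h
        simp only [Finset.mem_coe, hcross, edges, Finset.mem_filter, Finset.mem_product] at hp hq
        have h1 := congrArg Prod.fst h
        have h2 := congrArg Prod.snd h
        simp only at h1 h2
        have e1 : p.1 = q.1 := by
          rw [← Fin.snoc_init_self p.1, ← Fin.snoc_init_self q.1, h1, h2]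
        have hp2 : p.2 = Fin.snoc (Fin.init p.1) (!p.1 (Fin.last n)) := by
          have hinit : Fin.init p.1 = Fin.init p.2 := dist_cross p.1 p.2 hp.2 hp.1.2
          have h2last : p.2 (Fin.last n) = !p.1 (Fin.last n) := by
            have := hp.2; revert this
            cases p.1 (Fin.last n) <;> cases p.2 (Fin.last n) <;> simp
          rw [← Fin.snoc_init_self p.2, ← hinit, h2last]
        have hq2 : q.2 = Fin.snoc (Fin.init q.1) (!q.1 (Fin.last n)) := by
          have hinit : Fin.init q.1 = Fin.init q.2 := dist_cross q.1 q.2 hq.2 hq.1.2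
          have h2last : q.2 (Fin.last n) = !q.1 (Fin.last n) := by
            have := hq.2; revert this
            cases q.1 (Fin.last n) <;> cases q.2 (Fin.last n) <;> simp
          rw [← Fin.snoc_init_self q.2, ← hinit, h2last]
        refine Prod.ext e1 ?_
        rw [hp2, hq2, h1, h2]
    calc cross.card ≤ _ := this
      _ = (bslice W false ∩ bslice W true).card * 2 := by
          rw [Finset.card_product]; simp
      _ ≤ min (bslice W false).card (bslice W true).card * 2 := by
          apply Nat.mul_le_mul_right
          apply le_min
          · exact Finset.card_le_card Finset.inter_subset_left
          · exact Finset.card_le_card Finset.inter_subset_right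
      _ = 2 * min (bslice W false).card (bslice W true).card := by ring
  have h0 := hsameb false
  have h1 := hsameb true
  omega

lemma edge_bound : ∀ (n : ℕ) (W : Finset (Fin n → Bool)),
    ((edges W).card : ℝ) ≤ W.card * Real.logb 2 W.card := by
  intro n
  induction n with
  | zero =>
    intro W
    have he : edges W = ∅ := by
      rw [Finset.eq_empty_iff_forall_notMem]
      intro p hp
      simp only [edges, Finset.mem_filter] at hp
      have := hammingDist_le_card_fintype (x := p.1) (y := p.2)
      simp only [Fintype.card_fin] at this
      omega
    rw [he]
    simp only [Finset.card_empty, Nat.cast_zero]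
    rcases Nat.eq_zero_or_pos W.card with h | h
    · simp [h]
    · have h1 : (1:ℝ) ≤ W.card := by exact_mod_cast h
      exact mul_nonneg (by positivity) (Real.logb_nonneg one_lt_two h1)
  | succ n ih =>
    intro W
    have hcard : (bslice W false).card + (bslice W true).card = W.card := card_bslice_add W
    have h := core W
    set m0 := (bslice W false).card with hm0
    set m1 := (bslice W true).card with hm1
    have key : (m0:ℝ) * Real.logb 2 m0 + (m1:ℝ) * Real.logb 2 m1 + 2 * (min m0 m1 : ℕ)
        ≤ ((m0+m1 : ℕ) : ℝ) * Real.logb 2 ((m0+m1 : ℕ) : ℝ) := by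
      rcases le_total m0 m1 with hle | hle
      · have hl := log_ineq (a := (m1:ℝ)) (b := (m0:ℝ)) (by positivity) (by exact_mod_cast hle)
        rw [min_eq_left hle]
        push_cast
        push_cast at hl
        rw [show ((m0:ℝ) + (m1:ℝ)) = ((m1:ℝ) + (m0:ℝ)) from add_comm _ _]
        linarith
      · have hl := log_ineq (a := (m0:ℝ)) (b := (m1:ℝ)) (by positivity) (by exact_mod_cast hle)
        rw [min_eq_right hle]
        push_cast
        push_cast at hl
        linarith
    calc ((edges W).card : ℝ)
        ≤ ((edges (bslice W false)).card : ℝ) + ((edges (bslice W true)).card : ℝ)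
          + 2 * (min m0 m1 : ℕ) := by exact_mod_cast h
      _ ≤ (m0:ℝ) * Real.logb 2 m0 + (m1:ℝ) * Real.logb 2 m1 + 2 * (min m0 m1 : ℕ) := by
          have i0 := ih (bslice W false)
          have i1 := ih (bslice W true)
          linarith
      _ ≤ ((m0+m1 : ℕ) : ℝ) * Real.logb 2 ((m0+m1 : ℕ) : ℝ) := key
      _ = (W.card : ℝ) * Real.logb 2 (W.card : ℝ) := by rw [hcard]

def bdf {L : ℕ} (W : Finset (Fin L → Bool)) :
    Finset ((Fin L → Bool) × (Fin L → Bool)) :=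
  Finset.univ.filter (fun p => p.1 ∈ W ∧ p.2 ∉ W ∧ hammingDist p.1 p.2 = 1)

lemma bd_edges {L : ℕ} (W : Finset (Fin L → Bool)) :
    (bdf W).card + (edges W).card = W.card * L := by
  classical
  have hbd : (bdf W).card = ∑ f ∈ W,
      (({x | hammingDist f x = 1} : Finset (Fin L → Bool)).filter (fun x => ¬ x ∈ W)).card := by
    rw [Finset.card_eq_sum_card_fiberwise (f := Prod.fst) (s := bdf W) (t := W)
      (fun p hp => by simp only [Finset.mem_coe, bdf, Finset.mem_filter] at hp; exact hp.2.1)]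
    apply Finset.sum_congr rfl
    intro f hf
    apply Finset.card_nbij (fun p => p.2)
    · intro p hp
      simp only [Finset.mem_coe, bdf, Finset.mem_filter, Finset.mem_univ, true_and] at hp ⊢
      obtain ⟨⟨h1, h2, h3⟩, h4⟩ := hp
      exact ⟨by rw [← h4]; exact h3, h2⟩
    · intro p hp q hq h
      simp only [Finset.mem_coe, Finset.mem_filter] at hp hq
      exact Prod.ext (hp.2.trans hq.2.symm) h
    · intro x hx
      simp only [Finset.coe_filter, Set.mem_setOf_eq, Finset.mem_filter, Finset.mem_univ,
        true_and] at hx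
      refine ⟨(f, x), ?_, rfl⟩
      simp [bdf, hf, hx.1, hx.2]
  have hed : (edges W).card = ∑ f ∈ W,
      (({x | hammingDist f x = 1} : Finset (Fin L → Bool)).filter (fun x => x ∈ W)).card := by
    rw [Finset.card_eq_sum_card_fiberwise (f := Prod.fst) (s := edges W) (t := W)
      (fun p hp => by simp only [Finset.mem_coe, edges, Finset.mem_filter, Finset.mem_product] at hp
                      exact hp.1.1)]
    apply Finset.sum_congr rfl
    intro f hf
    apply Finset.card_nbij (fun p => p.2)
    · intro p hp
      simp only [Finset.mem_coe, edges, Finset.mem_filter, Finset.mem_product, Finset.mem_univ, true_and] at hp ⊢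
      obtain ⟨⟨⟨h1, h2⟩, h3⟩, h4⟩ := hp
      exact ⟨by rw [← h4]; exact h3, h2⟩
    · intro p hp q hq h
      simp only [Finset.mem_coe, Finset.mem_filter] at hp hq
      exact Prod.ext (hp.2.trans hq.2.symm) h
    · intro x hx
      simp only [Finset.coe_filter, Set.mem_setOf_eq, Finset.mem_filter, Finset.mem_univ,
        true_and] at hx
      refine ⟨(f, x), ?_, rfl⟩
      simp [edges, hf, hx.1, hx.2]
  rw [hbd, hed, ← Finset.sum_add_distrib]
  have : ∀ f ∈ W, (({x | hammingDist f x = 1} : Finset (Fin L → Bool)).filter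
        (fun x => ¬ x ∈ W)).card +
      (({x | hammingDist f x = 1} : Finset (Fin L → Bool)).filter (fun x => x ∈ W)).card = L := by
    intro f _
    rw [Nat.add_comm, Finset.card_filter_add_card_filter_not
      (s := ({x | hammingDist f x = 1} : Finset (Fin L → Bool))) (p := fun x => x ∈ W),
      sphere_card]
  rw [Finset.sum_congr rfl this, Finset.sum_const, smul_eq_mul]

lemma iso {L M : ℕ} {ε : ℝ} (hM : (M:ℝ) ≤ 2 ^ ((1-ε) * (L:ℝ))) (hM1 : 1 ≤ M)
    (W : Finset (Fin L → Bool)) (hW : W.card = M) :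
    ε * M * L ≤ ((bdf W).card : ℝ) := by
  have h1 : ((bdf W).card : ℝ) + ((edges W).card : ℝ) = (M:ℝ) * L := by
    have := bd_edges W
    rw [hW] at this
    exact_mod_cast this
  have h2 : ((edges W).card : ℝ) ≤ (M:ℝ) * Real.logb 2 M := by
    have := edge_bound L W
    rwa [hW] at this
  have hM0 : (0:ℝ) < M := by exact_mod_cast hM1
  have h3 : Real.logb 2 (M:ℝ) ≤ (1-ε) * L :=
    calc Real.logb 2 (M:ℝ) ≤ Real.logb 2 ((2:ℝ) ^ ((1-ε)*(L:ℝ))) :=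
          Real.logb_le_logb_of_le one_lt_two hM0 hM
      _ = (1-ε)*L := Real.logb_rpow (by norm_num) (by norm_num)
  have h4 : (M:ℝ) * Real.logb 2 M ≤ (M:ℝ) * ((1-ε)*L) :=
    mul_le_mul_of_nonneg_left h3 hM0.le
  nlinarith [h1, h2, h4]

noncomputable def idx {L : ℕ} (hL : 0 < L) (w x : Fin L → Bool) : Fin L :=
  if h : ∃ i, x = Function.update w i (!w i) then h.choose else ⟨0, hL⟩

lemma idx_spec {L : ℕ} (hL : 0 < L) (w x : Fin L → Bool) (h : hammingDist w x = 1) :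
    x = Function.update w (idx hL w x) (!w (idx hL w x)) := by
  rw [dist_one_iff] at h
  rw [idx, dif_pos h]
  exact h.choose_spec

lemma choose_id (b k : ℕ) :
    (k+2)*(k+1)*Nat.choose (b+2) (k+2) = (b+2)*(b+1)*Nat.choose b k := by
  have h1 := Nat.add_one_mul_choose_eq (b+1) (k+1)
  have h2 := Nat.add_one_mul_choose_eq b k
  calc (k+2)*(k+1)*Nat.choose (b+2) (k+2)
      = (k+1)*(Nat.choose (b+2) (k+2) * (k+2)) := by ring
    _ = (k+1)*((b+1+1) * Nat.choose (b+1) (k+1)) := by rw [← h1]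
    _ = (b+2)*(Nat.choose (b+1) (k+1) * (k+1)) := by ring
    _ = (b+2)*((b+1) * Nat.choose b k) := by rw [← h2]
    _ = (b+2)*(b+1)*Nat.choose b k := by ring

lemma bad_bound {L : ℕ} (W : Finset (Fin L → Bool)) (k : ℕ) :
    2 * (((bdf W).powersetCard (k+2)).filter
        (fun S => ¬ ∀ e₁ ∈ S, ∀ e₂ ∈ S, e₁ ≠ e₂ → e₁.1 ≠ e₂.1)).card ≤
      (((bdf W) ×ˢ (bdf W)).filter (fun q => q.1 ≠ q.2 ∧ q.1.1 = q.2.1)).card *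
        ((bdf W).card - 2).choose k := by
  set bd := bdf W with hbd
  set pr := ((bd ×ˢ bd).filter (fun q => q.1 ≠ q.2 ∧ q.1.1 = q.2.1)) with hpr
  set bad := ((bd.powersetCard (k+2)).filter
    (fun S => ¬ ∀ e₁ ∈ S, ∀ e₂ ∈ S, e₁ ≠ e₂ → e₁.1 ≠ e₂.1)) with hbad
  set incid := ((pr ×ˢ bad).filter (fun x => x.1.1 ∈ x.2 ∧ x.1.2 ∈ x.2)) with hincid
  classical
  have lower : 2 * bad.card ≤ incid.card := by
    rw [Finset.card_eq_sum_card_fiberwise (f := Prod.snd) (s := incid) (t := bad)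
      (fun x hx => by
        simp only [Finset.mem_coe, hincid, Finset.mem_filter, Finset.mem_product] at hx
        exact hx.1.2)]
    have : 2 * bad.card = ∑ _S ∈ bad, 2 := by
      rw [Finset.sum_const, smul_eq_mul]; ring
    rw [this]
    apply Finset.sum_le_sum
    intro S hS
    have hS' := hS
    simp only [hbad, Finset.mem_filter, Finset.mem_powersetCard] at hS'
    obtain ⟨⟨hsub, hcard⟩, hnP⟩ := hS'
    push_neg at hnP
    obtain ⟨e₁, he₁, e₂, he₂, hne, hfst⟩ := hnP
    have h1 : ((e₁, e₂), S) ∈ incid.filter (fun x => x.2 = S) := by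
      simp only [hincid, hpr, Finset.mem_filter, Finset.mem_product]
      exact ⟨⟨⟨⟨⟨hsub he₁, hsub he₂⟩, hne, hfst⟩, hS⟩, he₁, he₂⟩, trivial⟩
    have h2 : ((e₂, e₁), S) ∈ incid.filter (fun x => x.2 = S) := by
      simp only [hincid, hpr, Finset.mem_filter, Finset.mem_product]
      exact ⟨⟨⟨⟨⟨hsub he₂, hsub he₁⟩, hne.symm, hfst.symm⟩, hS⟩, he₂, he₁⟩, trivial⟩
    have hdist : (((e₁, e₂), S) : ((_ × _) × _)) ≠ ((e₂, e₁), S) := by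
      intro h
      rw [Prod.mk.injEq, Prod.mk.injEq] at h
      exact hne h.1.1
    calc 2 = ({((e₁, e₂), S), ((e₂, e₁), S)} : Finset _).card :=
          (Finset.card_pair hdist).symm
      _ ≤ _ := by
          apply Finset.card_le_card
          intro x hx
          rcases Finset.mem_insert.mp hx with rfl | hx
          · exact h1
          · rw [Finset.mem_singleton.mp hx]
            exact h2
  have upper : incid.card ≤ pr.card * (bd.card - 2).choose k := by
    rw [Finset.card_eq_sum_card_fiberwise (f := Prod.fst) (s := incid) (t := pr)
      (fun x hx => by
        simp only [Finset.mem_coe, hincid, Finset.mem_filter, Finset.mem_product] at hx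
        exact hx.1.1)]
    have htot : pr.card * (bd.card - 2).choose k = ∑ _q ∈ pr, (bd.card - 2).choose k := by
      rw [Finset.sum_const, smul_eq_mul]
    rw [htot]
    apply Finset.sum_le_sum
    intro q hq
    have hq' := hq
    simp only [hpr, Finset.mem_filter, Finset.mem_product] at hq'
    obtain ⟨⟨hq1, hq2⟩, hqne, hqfst⟩ := hq'
    have htarget : (((bd.erase q.1).erase q.2).powersetCard k).card
        = (bd.card - 2).choose k := by
      rw [Finset.card_powersetCard, Finset.card_erase_of_mem
        (Finset.mem_erase.mpr ⟨hqne.symm, hq2⟩), Finset.card_erase_of_mem hq1]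
      have hh : bd.card - 1 - 1 = bd.card - 2 := by omega
      rw [hh]
    rw [← htarget]
    apply Finset.card_le_card_of_injOn (fun x => (x.2.erase q.1).erase q.2)
    · intro x hx
      simp only [Finset.mem_coe, hincid, Finset.mem_filter, Finset.mem_product] at hx
      obtain ⟨⟨⟨hxp, hxb⟩, hx1, hx2⟩, hxq⟩ := hx
      rw [hxq] at hx1 hx2
      simp only [hbad, Finset.mem_filter, Finset.mem_powersetCard] at hxb
      rw [Finset.mem_coe, Finset.mem_powersetCard]
      constructor
      · exact Finset.erase_subset_erase _ (Finset.erase_subset_erase _ hxb.1.1)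
      · rw [Finset.card_erase_of_mem (Finset.mem_erase.mpr ⟨hqne.symm, hx2⟩),
          Finset.card_erase_of_mem hx1, hxb.1.2]
        omega
    · intro x hx y hy hxy
      have hxy' : (x.2.erase q.1).erase q.2 = (y.2.erase q.1).erase q.2 := hxy
      simp only [Finset.mem_coe, Finset.mem_filter] at hx hy
      obtain ⟨hxi, hxq⟩ := hx
      obtain ⟨hyi, hyq⟩ := hy
      simp only [hincid, Finset.mem_filter, Finset.mem_product] at hxi hyi
      have hx1 : q.1 ∈ x.2 := by rw [← hxq]; exact hxi.2.1
      have hx2 : q.2 ∈ x.2 := by rw [← hxq]; exact hxi.2.2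
      have hy1 : q.1 ∈ y.2 := by rw [← hyq]; exact hyi.2.1
      have hy2 : q.2 ∈ y.2 := by rw [← hyq]; exact hyi.2.2
      have ex : x.2 = insert q.1 (insert q.2 ((x.2.erase q.1).erase q.2)) := by
        rw [Finset.insert_erase (Finset.mem_erase.mpr ⟨hqne.symm, hx2⟩),
          Finset.insert_erase hx1]
      have ey : y.2 = insert q.1 (insert q.2 ((y.2.erase q.1).erase q.2)) := by
        rw [Finset.insert_erase (Finset.mem_erase.mpr ⟨hqne.symm, hy2⟩),
          Finset.insert_erase hy1]
      have e2 : x.2 = y.2 := by rw [ex, ey, hxy']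
      exact Prod.ext (hxq.trans hyq.symm) e2
  omega

lemma pairs_bound {L : ℕ} (hL : 0 < L) (W : Finset (Fin L → Bool)) :
    (((bdf W) ×ˢ (bdf W)).filter (fun q => q.1 ≠ q.2 ∧ q.1.1 = q.2.1)).card
      ≤ W.card * (L * L) := by
  classical
  have key : (((bdf W) ×ˢ (bdf W)).filter (fun q => q.1 ≠ q.2 ∧ q.1.1 = q.2.1)).card
      ≤ (W ×ˢ ((Finset.univ : Finset (Fin L)) ×ˢ (Finset.univ : Finset (Fin L)))).card := by
    apply Finset.card_le_card_of_injOn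
      (fun q : ((Fin L → Bool) × (Fin L → Bool)) × ((Fin L → Bool) × (Fin L → Bool)) =>
        (q.1.1, idx hL q.1.1 q.1.2, idx hL q.2.1 q.2.2))
    · intro q hq
      simp only [Finset.mem_coe, Finset.mem_filter, Finset.mem_product, bdf, Finset.mem_univ, true_and] at hq ⊢
      exact ⟨hq.1.1.1, trivial⟩
    · intro q hq q' hq' h
      simp only [Finset.mem_coe, Finset.mem_filter, Finset.mem_product, bdf,
        Finset.mem_univ, true_and] at hq hq'
      obtain ⟨⟨⟨hw1, _, hd1⟩, ⟨hw2, _, hd2⟩⟩, hne, hff⟩ := hq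
      obtain ⟨⟨⟨hw1', _, hd1'⟩, ⟨hw2', _, hd2'⟩⟩, hne', hff'⟩ := hq'
      have h' : (q.1.1, idx hL q.1.1 q.1.2, idx hL q.2.1 q.2.2)
          = (q'.1.1, idx hL q'.1.1 q'.1.2, idx hL q'.2.1 q'.2.2) := h
      rw [Prod.mk.injEq, Prod.mk.injEq] at h'
      obtain ⟨h0, hi1, hi2⟩ := h'
      have e12 : q.1.2 = q'.1.2 := by
        rw [idx_spec hL q.1.1 q.1.2 hd1, idx_spec hL q'.1.1 q'.1.2 hd1', hi1, h0]
      have e21 : q.2.1 = q'.2.1 := by rw [← hff, ← hff', h0]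
      have e22 : q.2.2 = q'.2.2 := by
        rw [idx_spec hL q.2.1 q.2.2 hd2, idx_spec hL q'.2.1 q'.2.2 hd2', hi2, e21]
      exact Prod.ext (Prod.ext h0 e12) (Prod.ext e21 e22)
  calc _ ≤ _ := key
    _ = W.card * (L * L) := by
        rw [Finset.card_product, Finset.card_product]
        simp

set_option maxHeartbeats 1000000 in
theorem stmt_12 (ε c : ℝ) (hε0 : 0 < ε) (hε1 : ε < 1) (hc0 : 0 < c) (hc1 : c < 1)
    (L M K : ℕ) (hM : (M : ℝ) ≤ 2 ^ ((1 - ε) * L))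
    (hK : (K : ℝ) ≤ c * ε * Real.sqrt M)
    (hbig : ε * M * L / Real.sqrt 2 ≤ ε * M * L - K + 1)
    (W : Finset (Fin L → Bool)) (hW : W.card = M) :
    (1 - c ^ 2) * (((boundary L W).ncard).choose K : ℝ)
      ≤ ({S | IsSpecial L K W S}.ncard : ℝ) := by
  have hbset : boundary L W = ↑(bdf W) := by
    ext p
    simp [boundary, bdf]
  have hBn : (boundary L W).ncard = (bdf W).card := by
    rw [hbset, Set.ncard_coe_finset]
  set specials := ((bdf W).powersetCard K).filter
    (fun S => ∀ e₁ ∈ S, ∀ e₂ ∈ S, e₁ ≠ e₂ → e₁.1 ≠ e₂.1) with hsp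
  have hset : {S | IsSpecial L K W S} = ↑specials := by
    ext S
    simp only [Set.mem_setOf_eq, IsSpecial, hsp, Finset.coe_filter, Finset.mem_powersetCard,
      Set.mem_setOf_eq]
    rw [hbset, Finset.coe_subset]
    tauto
  have hSn : ({S | IsSpecial L K W S}).ncard = specials.card := by
    rw [hset, Set.ncard_coe_finset]
  rw [hBn, hSn]
  set B := (bdf W).card with hB
  set badset := ((bdf W).powersetCard K).filter
    (fun S => ¬ ∀ e₁ ∈ S, ∀ e₂ ∈ S, e₁ ≠ e₂ → e₁.1 ≠ e₂.1) with hbadset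
  have hsum : specials.card + badset.card = B.choose K := by
    rw [hsp, hbadset, Finset.card_filter_add_card_filter_not, Finset.card_powersetCard]
  have hchooseNN : (0:ℝ) ≤ (B.choose K : ℝ) := by positivity
  rcases le_or_gt K 1 with hK1 | hK1
  · have hbadempty : badset = ∅ := by
      rw [Finset.eq_empty_iff_forall_notMem]
      intro S hS
      simp only [hbadset, Finset.mem_filter, Finset.mem_powersetCard] at hS
      apply hS.2
      intro e₁ he₁ e₂ he₂ hne
      exact absurd (Finset.card_le_one.mp (hS.1.2 ▸ hK1) e₁ he₁ e₂ he₂) hne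
    have hspec : specials.card = B.choose K := by
      rw [← hsum, hbadempty]
      simp
    rw [hspec]
    nlinarith [sq_nonneg c]
  obtain ⟨k, rfl⟩ : ∃ k, K = k + 2 := ⟨K - 2, by omega⟩
  rcases lt_or_ge B (k+2) with hBK | hBK
  · rw [Nat.choose_eq_zero_of_lt hBK]
    push_cast
    rw [mul_zero]
    positivity
  have hM1 : 1 ≤ M := by
    by_contra h
    have hM0 : M = 0 := by omega
    have hWe : W = ∅ := Finset.card_eq_zero.mp (by omega)
    have : bdf W = ∅ := by
      rw [Finset.eq_empty_iff_forall_notMem]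
      intro p hp
      simp [bdf, hWe] at hp
    rw [hB, this] at hBK
    simp at hBK
  have hL0 : 0 < L := by
    by_contra h
    have hL : L = 0 := by omega
    have : bdf W = ∅ := by
      rw [Finset.eq_empty_iff_forall_notMem]
      intro p hp
      simp only [bdf, Finset.mem_filter] at hp
      obtain ⟨-, -, -, hd⟩ := hp
      have hle := hammingDist_le_card_fintype (x := p.1) (y := p.2)
      rw [Fintype.card_fin] at hle
      omega
    rw [hB, this] at hBK
    simp at hBK
  have hiso : ε * M * L ≤ (B:ℝ) := iso hM hM1 W hW
  obtain ⟨b, hb⟩ : ∃ b, B = b + 2 := ⟨B - 2, by omega⟩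
  have hbb := bad_bound W k
  have hpair := pairs_bound hL0 W
  rw [hW] at hpair
  have hB2 : (bdf W).card - 2 = b := by omega
  rw [hB2] at hbb
  have hchoose := choose_id b k
  -- real abbreviations
  set R : ℝ := (B.choose (k+2) : ℝ) with hR
  set D : ℝ := ((Nat.choose b k : ℕ) : ℝ) with hD
  have hD0 : (0:ℝ) ≤ D := by positivity
  have F1 : (specials.card : ℝ) + (badset.card : ℝ) = R := by
    rw [hR]; exact_mod_cast hsum
  have F2 : 2 * (badset.card : ℝ) ≤ ((M:ℝ) * (L*L)) * D := by
    have h1 : 2 * (badset.card : ℝ)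
        ≤ (((((bdf W) ×ˢ (bdf W)).filter (fun q => q.1 ≠ q.2 ∧ q.1.1 = q.2.1)).card : ℝ)) * D := by
      rw [hD]; exact_mod_cast hbb
    have h2 : ((((bdf W) ×ˢ (bdf W)).filter (fun q => q.1 ≠ q.2 ∧ q.1.1 = q.2.1)).card : ℝ)
        ≤ (M:ℝ) * (L*L) := by exact_mod_cast hpair
    calc 2 * (badset.card : ℝ) ≤ _ := h1
      _ ≤ ((M:ℝ) * (L*L)) * D := mul_le_mul_of_nonneg_right h2 hD0
  have F3 : ((k:ℝ)+2)*((k:ℝ)+1)*R = ((b:ℝ)+2)*((b:ℝ)+1)*D := by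
    rw [hR, hD, hb]
    exact_mod_cast hchoose
  have hBb : (B:ℝ) = (b:ℝ) + 2 := by exact_mod_cast hb
  -- numeric inequality
  set x : ℝ := ε * M * L with hx
  have hx0 : 0 ≤ x := by positivity
  have hs : Real.sqrt 2 * Real.sqrt 2 = 2 := Real.mul_self_sqrt (by norm_num)
  have hs1 : 1 ≤ Real.sqrt 2 := by
    rw [show (1:ℝ) = Real.sqrt 1 by simp]
    exact Real.sqrt_le_sqrt (by norm_num)
  have hs0 : 0 < Real.sqrt 2 := by linarith
  have hB1 : x / Real.sqrt 2 ≤ (b:ℝ) + 1 := by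
    have : x / Real.sqrt 2 ≤ x - ((k:ℝ)+2) + 1 := by
      have := hbig
      push_cast at this
      linarith
    have hk0 : (0:ℝ) ≤ (k:ℝ) := by positivity
    have : x - ((k:ℝ)+2) + 1 ≤ (b:ℝ) + 1 := by
      have : x ≤ (b:ℝ) + 2 := by rw [← hBb]; exact hiso
      linarith
    linarith
  have hxx : x * x ≤ Real.sqrt 2 * (((b:ℝ)+2) * ((b:ℝ)+1)) := by
    have hb10 : 0 ≤ (b:ℝ) + 1 := by positivity
    have h1 : x * (x / Real.sqrt 2) ≤ ((b:ℝ)+2) * ((b:ℝ)+1) := by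
      apply mul_le_mul _ hB1 (by positivity) (by positivity)
      rw [← hBb]; exact hiso
    have h2 : x * (x / Real.sqrt 2) = x * x / Real.sqrt 2 := by ring
    rw [h2] at h1
    rw [div_le_iff₀ hs0] at h1
    linarith [h1]
  have hKK : ((k:ℝ)+2)*((k:ℝ)+1) ≤ c^2 * ε^2 * M := by
    have hsqM : Real.sqrt M * Real.sqrt M = (M:ℝ) := Real.mul_self_sqrt (by positivity)
    have hK' : ((k:ℝ)+2) ≤ c * ε * Real.sqrt M := by
      have := hK
      push_cast at this
      linarith
    have h1 : ((k:ℝ)+2)*((k:ℝ)+1) ≤ ((k:ℝ)+2)*((k:ℝ)+2) :=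
      mul_le_mul_of_nonneg_left (by linarith [Nat.cast_nonneg (α := ℝ) k]) (by positivity)
    have h2 : ((k:ℝ)+2)*((k:ℝ)+2) ≤ (c * ε * Real.sqrt M) * (c * ε * Real.sqrt M) :=
      mul_le_mul hK' hK' (by positivity) (by positivity)
    have h3 : (c * ε * Real.sqrt M) * (c * ε * Real.sqrt M) = c^2 * ε^2 * M := by
      calc (c * ε * Real.sqrt M) * (c * ε * Real.sqrt M)
          = c^2 * ε^2 * (Real.sqrt M * Real.sqrt M) := by ring
        _ = c^2 * ε^2 * M := by rw [hsqM]
    linarith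
  have key : (M:ℝ)*(L*L) * (((k:ℝ)+2)*((k:ℝ)+1)) ≤ 2 * c^2 * (((b:ℝ)+2) * ((b:ℝ)+1)) := by
    have hMLL : (0:ℝ) ≤ (M:ℝ)*(L*L) := by positivity
    have stepA : (M:ℝ)*(L*L) * (((k:ℝ)+2)*((k:ℝ)+1)) ≤ c^2 * (x * x) := by
      have := mul_le_mul_of_nonneg_left hKK hMLL
      calc (M:ℝ)*(L*L) * (((k:ℝ)+2)*((k:ℝ)+1)) ≤ (M:ℝ)*(L*L) * (c^2 * ε^2 * M) := this
        _ = c^2 * (x * x) := by rw [hx]; ring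
    have hbb0 : (0:ℝ) ≤ ((b:ℝ)+2) * ((b:ℝ)+1) := by positivity
    have stepB : c^2 * (x * x) ≤ 2 * c^2 * (((b:ℝ)+2) * ((b:ℝ)+1)) := by
      have hsle2 : Real.sqrt 2 ≤ 2 := by nlinarith
      have h1 : x * x ≤ 2 * (((b:ℝ)+2) * ((b:ℝ)+1)) := by
        calc x * x ≤ Real.sqrt 2 * (((b:ℝ)+2) * ((b:ℝ)+1)) := hxx
          _ ≤ 2 * (((b:ℝ)+2) * ((b:ℝ)+1)) := mul_le_mul_of_nonneg_right hsle2 hbb0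
      nlinarith [sq_nonneg c, h1]
    linarith
  -- conclude bad ≤ c² R
  have hbadle : (badset.card : ℝ) ≤ c^2 * R := by
    have hkk0 : (0:ℝ) < ((k:ℝ)+2)*((k:ℝ)+1) := by positivity
    have main : 2 * (badset.card : ℝ) * (((k:ℝ)+2)*((k:ℝ)+1))
        ≤ 2 * (c^2 * R) * (((k:ℝ)+2)*((k:ℝ)+1)) := by
      have h1 : 2 * (badset.card : ℝ) * (((k:ℝ)+2)*((k:ℝ)+1))
          ≤ ((M:ℝ) * (L*L)) * D * (((k:ℝ)+2)*((k:ℝ)+1)) :=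
        mul_le_mul_of_nonneg_right F2 hkk0.le
      have h2 : ((M:ℝ) * (L*L)) * D * (((k:ℝ)+2)*((k:ℝ)+1))
          ≤ 2 * c^2 * (((b:ℝ)+2) * ((b:ℝ)+1)) * D := by
        have := mul_le_mul_of_nonneg_right key hD0
        calc ((M:ℝ) * (L*L)) * D * (((k:ℝ)+2)*((k:ℝ)+1))
            = (M:ℝ)*(L*L) * (((k:ℝ)+2)*((k:ℝ)+1)) * D := by ring
          _ ≤ 2 * c^2 * (((b:ℝ)+2) * ((b:ℝ)+1)) * D := this
      have h3 : 2 * c^2 * (((b:ℝ)+2) * ((b:ℝ)+1)) * D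
          = 2 * (c^2 * R) * (((k:ℝ)+2)*((k:ℝ)+1)) := by
        have h4 : ((b:ℝ)+2) * ((b:ℝ)+1) * D = ((k:ℝ)+2)*((k:ℝ)+1)*R := by linarith [F3]
        linear_combination 2 * c^2 * h4
      linarith
    have := le_of_mul_le_mul_right (by linarith [main] :
      (2 * (badset.card : ℝ)) * (((k:ℝ)+2)*((k:ℝ)+1))
        ≤ (2 * (c^2 * R)) * (((k:ℝ)+2)*((k:ℝ)+1))) hkk0
    linarith
  linarith [F1, hbadle]
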